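/- Let p be a prime, c a positive integer prime to p, r ≥ 1, (l_1,...,l_r) nonnegative integers, (ε_1,...,ε_r) c-th roots of unity, and (κ_1,...,κ_{r-1}) nonnegative integers. Define, for h a positive integer, S_h = Σ over tuples (u_1,...,u_r) of nonnegative integers with u_1 < h and u_{i-1} + κ_{i-1}·h < u_i < u_{i-1} + (κ_{i-1}+1)·h for 2 ≤ i ≤ r, of (ε_2/ε_1)^{u_1} ··· (1/ε_r)^{u_r} · u_1^{l_1} ··· u_r^{l_r} ∈ ℚ(μ_c). Then there exist elements B_{l,ξ} ∈ ℚ(μ_c), indexed by 0 ≤ l ≤ l_1+...+l_r+r and ξ ∈ μ_c, depending only on (l_i), (ε_i), (κ_i), such that for all h ≥ 1: S_h = Σ_{l,ξ} B_{l,ξ} · h^l · ξ^h. -/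

import Mathlib

open scoped Classical

/-- `u_{i-1}` with the convention `u_0 = 0`. -/
def prevOr0 {r : ℕ} (u : Fin r → ℕ) (i : Fin r) : ℕ :=
  if _h : 0 < (i : ℕ) then u ⟨(i : ℕ) - 1, lt_of_le_of_lt (Nat.sub_le _ _) i.isLt⟩ else 0

open Finset

section QP
variable {K : Type*} [Field K] [CharZero K]

/-- generators of single-variable quasi-polynomials of degree ≤ L with c-th root twists -/
def qgen (c L : ℕ) : Set (ℕ → K) :=
  {f | ∃ a : ℕ, ∃ ξ : K, a ≤ L ∧ ξ ^ c = 1 ∧ f = fun h : ℕ => (h : K) ^ a * ξ ^ h}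

lemma qgen_mono {c L L' : ℕ} (hL : L ≤ L') : qgen (K := K) c L ⊆ qgen c L' := by
  rintro f ⟨a, ξ, ha, hξ, rfl⟩; exact ⟨a, ξ, ha.trans hL, hξ, rfl⟩

/-- `f` agrees for `h ≥ 1` with an element of the span of `qgen c L`. -/
def IsQ (c L : ℕ) (f : ℕ → K) : Prop :=
  ∃ g ∈ Submodule.span K (qgen (K := K) c L), ∀ h : ℕ, 1 ≤ h → f h = g h

lemma IsQ.mono {c L L' : ℕ} {f : ℕ → K} (hL : L ≤ L') (hf : IsQ c L f) : IsQ c L' f := by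
  obtain ⟨g, hg, he⟩ := hf
  exact ⟨g, Submodule.span_mono (qgen_mono hL) hg, he⟩

lemma IsQ.congr {c L : ℕ} {f f' : ℕ → K} (hf : IsQ c L f) (h : ∀ h : ℕ, 1 ≤ h → f' h = f h) :
    IsQ c L f' := by
  obtain ⟨g, hg, he⟩ := hf
  exact ⟨g, hg, fun n hn => (h n hn).trans (he n hn)⟩

lemma isQ_of_mem {c L : ℕ} {f : ℕ → K} (hf : f ∈ Submodule.span K (qgen (K := K) c L)) :
    IsQ c L f := ⟨f, hf, fun _ _ => rfl⟩

lemma IsQ.monomial {c L : ℕ} {a : ℕ} {ξ : K} (ha : a ≤ L) (hξ : ξ ^ c = 1) :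
    IsQ c L (fun h => (h : K) ^ a * ξ ^ h) :=
  isQ_of_mem (Submodule.subset_span ⟨a, ξ, ha, hξ, rfl⟩)

lemma IsQ.hpow {c L : ℕ} {a : ℕ} (ha : a ≤ L) : IsQ c L (fun h => (h : K) ^ a) :=
  (IsQ.monomial ha (one_pow c)).congr (fun h _ => by simp)

lemma IsQ.rootpow {c L : ℕ} {ξ : K} (hξ : ξ ^ c = 1) : IsQ c L (fun h => ξ ^ h) :=
  (IsQ.monomial (Nat.zero_le L) hξ).congr (fun h _ => by simp)

lemma IsQ.const {c L : ℕ} (x : K) : IsQ c L (fun _ => x) := by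
  refine isQ_of_mem ?_
  have : (fun _ : ℕ => x) = x • (fun h : ℕ => (h : K) ^ 0 * (1:K) ^ h) := by
    funext h; simp
  rw [this]
  exact Submodule.smul_mem _ _ (Submodule.subset_span ⟨0, 1, Nat.zero_le L, one_pow c, rfl⟩)

lemma IsQ.smul {c L : ℕ} {f : ℕ → K} (x : K) (hf : IsQ c L f) :
    IsQ c L (fun h => x * f h) := by
  obtain ⟨g, hg, he⟩ := hf
  exact ⟨x • g, Submodule.smul_mem _ _ hg, fun n hn => by
    simp [Pi.smul_apply, smul_eq_mul, he n hn]⟩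

lemma IsQ.mul {c L M : ℕ} {f₁ f₂ : ℕ → K} (h₁ : IsQ c L f₁) (h₂ : IsQ c M f₂) :
    IsQ c (L + M) (fun h => f₁ h * f₂ h) := by
  obtain ⟨g₁, hg₁, he₁⟩ := h₁
  obtain ⟨g₂, hg₂, he₂⟩ := h₂
  refine ⟨g₁ * g₂, ?_, fun n hn => by simp [Pi.mul_apply, he₁ n hn, he₂ n hn]⟩
  have hmul : g₁ * g₂ ∈ Submodule.span K (qgen (K := K) c L) * Submodule.span K (qgen (K := K) c M) :=
    Submodule.mul_mem_mul hg₁ hg₂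
  rw [Submodule.span_mul_span] at hmul
  refine Submodule.span_le.mpr ?_ hmul
  rintro x ⟨x₁, hx₁, x₂, hx₂, rfl⟩
  obtain ⟨a, ξ, ha, hξ, rfl⟩ := hx₁
  obtain ⟨b, ζ, hb, hζ, rfl⟩ := hx₂
  refine Submodule.subset_span ⟨a + b, ξ * ζ, Nat.add_le_add ha hb, by
    rw [mul_pow, hξ, hζ, one_mul], ?_⟩
  funext h
  simp only [Pi.mul_apply]
  rw [pow_add, mul_pow]
  ring

lemma IsQ.finsetSum {c L : ℕ} {ι : Type*} {s : Finset ι} {F : ι → ℕ → K}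
    (hF : ∀ i ∈ s, IsQ c L (F i)) : IsQ c L (fun h => ∑ i ∈ s, F i h) := by
  classical
  choose g hg he using hF
  refine ⟨∑ i ∈ s.attach, g i.1 i.2, Submodule.sum_mem _ (fun i _ => hg i.1 i.2), fun n hn => ?_⟩
  show ∑ i ∈ s, F i n = _
  rw [Finset.sum_apply, ← Finset.sum_attach s (fun i => F i n)]
  exact Finset.sum_congr rfl fun i _ => he i.1 i.2 n hn

/-- key: exists a span element whose forward difference is `h^a ξ^h`. -/
lemma exists_delta (c : ℕ) (ξ : K) (hξ : ξ ^ c = 1) (a : ℕ) :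
    ∃ G ∈ Submodule.span K (qgen (K := K) c (a + 1)),
      ∀ h : ℕ, G (h + 1) - G h = (h : K) ^ a * ξ ^ h := by
  induction a using Nat.strong_induction_on with
  | _ a IH =>
  have IH' : ∀ j, j < a → ∃ G ∈ Submodule.span K (qgen (K := K) c (a + 1)),
      ∀ h : ℕ, G (h + 1) - G h = (h : K) ^ j * ξ ^ h := by
    intro j hj
    obtain ⟨G, hG, hd⟩ := IH j hj
    exact ⟨G, Submodule.span_mono (qgen_mono (by omega)) hG, hd⟩
  choose Gj hGj hdj using IH'
  by_cases hξ1 : ξ = 1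
  · subst hξ1
    set G₀ : ℕ → K := ((a + 1 : K))⁻¹ • (fun h : ℕ => (h : K) ^ (a + 1) * (1:K) ^ h) with hG₀
    have hG₀mem : G₀ ∈ Submodule.span K (qgen (K := K) c (a + 1)) :=
      Submodule.smul_mem _ _ (Submodule.subset_span ⟨a + 1, 1, le_refl _, one_pow c, rfl⟩)
    set cj : ℕ → K := fun j => ((a + 1 : K))⁻¹ * ((a + 1).choose j : K) with hcj
    refine ⟨G₀ - ∑ j ∈ (Finset.range a).attach, cj j.1 • Gj j.1 (Finset.mem_range.mp j.2),
      Submodule.sub_mem _ hG₀mem (Submodule.sum_mem _ (fun j _ =>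
        Submodule.smul_mem _ _ (hGj j.1 (Finset.mem_range.mp j.2)))), ?_⟩
    intro h
    have ha1 : ((a:K) + 1) ≠ 0 := by
      have : ((a+1 : ℕ) : K) ≠ 0 := Nat.cast_ne_zero.mpr (Nat.succ_ne_zero a)
      push_cast at this; exact this
    have hdelta0 : G₀ (h + 1) - G₀ h
        = (h:K)^a * (1:K)^h + ∑ j ∈ Finset.range a, cj j * ((h:K)^j * (1:K)^h) := by
      simp only [hG₀, Pi.smul_apply, smul_eq_mul, one_pow, mul_one]
      have hb : ((h:K) + 1) ^ (a+1) = ∑ j ∈ Finset.range (a + 1 + 1), (h:K) ^ j * ((a+1).choose j : K) := by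
        rw [add_pow]
        exact Finset.sum_congr rfl fun j _ => by rw [one_pow, mul_one]
      have hcast : (((h+1 : ℕ)) : K) = (h:K) + 1 := by push_cast; ring
      rw [hcast, hb, Finset.sum_range_succ, Finset.sum_range_succ]
      simp only [hcj, one_pow, mul_one]
      have h1 : ((a+1).choose (a+1) : K) = 1 := by simp
      have h2 : ((a+1).choose a : K) = (a : K) + 1 := by
        rw [Nat.choose_succ_self_right]; push_cast; ring
      rw [h1, h2]
      have h3 : ∑ x ∈ Finset.range a, ((a:K) + 1)⁻¹ * ((a + 1).choose x : K) * (h:K) ^ x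
          = ((a:K)+1)⁻¹ * ∑ x ∈ Finset.range a, (h:K) ^ x * ((a + 1).choose x : K) := by
        rw [Finset.mul_sum]; exact Finset.sum_congr rfl fun x _ => by ring
      rw [h3]
      field_simp
      ring
    simp only [Pi.sub_apply, Finset.sum_apply, Pi.smul_apply, smul_eq_mul]
    have hsum : (∑ j ∈ (Finset.range a).attach, cj j.1 * Gj j.1 (Finset.mem_range.mp j.2) (h+1))
        - (∑ j ∈ (Finset.range a).attach, cj j.1 * Gj j.1 (Finset.mem_range.mp j.2) h)
        = ∑ j ∈ Finset.range a, cj j * ((h:K)^j * (1:K)^h) := by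
      rw [← Finset.sum_sub_distrib,
        ← Finset.sum_attach (Finset.range a) (fun j => cj j * ((h:K)^j * (1:K)^h))]
      refine Finset.sum_congr rfl fun j _ => ?_
      rw [← mul_sub, hdj j.1 (Finset.mem_range.mp j.2) h]
    calc G₀ (h+1) - (∑ j ∈ (Finset.range a).attach, cj j.1 * Gj j.1 (Finset.mem_range.mp j.2) (h+1))
          - (G₀ h - ∑ j ∈ (Finset.range a).attach, cj j.1 * Gj j.1 (Finset.mem_range.mp j.2) h)
        = (G₀ (h+1) - G₀ h) - ((∑ j ∈ (Finset.range a).attach, cj j.1 * Gj j.1 (Finset.mem_range.mp j.2) (h+1)) - (∑ j ∈ (Finset.range a).attach, cj j.1 * Gj j.1 (Finset.mem_range.mp j.2) h)) := by ring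
      _ = (h : K) ^ a * (1:K) ^ h := by rw [hdelta0, hsum]; ring
  · set G₀ : ℕ → K := (ξ - 1)⁻¹ • (fun h : ℕ => (h : K) ^ a * ξ ^ h) with hG₀
    have hG₀mem : G₀ ∈ Submodule.span K (qgen (K := K) c (a + 1)) :=
      Submodule.smul_mem _ _ (Submodule.subset_span ⟨a, ξ, by omega, hξ, rfl⟩)
    set cj : ℕ → K := fun j => ξ * (ξ - 1)⁻¹ * (a.choose j : K) with hcj
    refine ⟨G₀ - ∑ j ∈ (Finset.range a).attach, cj j.1 • Gj j.1 (Finset.mem_range.mp j.2),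
      Submodule.sub_mem _ hG₀mem (Submodule.sum_mem _ (fun j _ =>
        Submodule.smul_mem _ _ (hGj j.1 (Finset.mem_range.mp j.2)))), ?_⟩
    intro h
    have hne : ξ - 1 ≠ 0 := sub_ne_zero.mpr hξ1
    have hdelta0 : G₀ (h + 1) - G₀ h
        = (h:K)^a * ξ^h + ∑ j ∈ Finset.range a, cj j * ((h:K)^j * ξ^h) := by
      simp only [hG₀, Pi.smul_apply, smul_eq_mul]
      have hb : ((h:K) + 1) ^ a = ∑ j ∈ Finset.range (a + 1), (h:K) ^ j * (a.choose j : K) := by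
        rw [add_pow]
        exact Finset.sum_congr rfl fun j _ => by rw [one_pow, mul_one]
      have hcast : (((h+1 : ℕ)) : K) = (h:K) + 1 := by push_cast; ring
      rw [hcast, hb, Finset.sum_range_succ, pow_succ]
      simp only [hcj]
      rw [Nat.choose_self, Nat.cast_one, mul_one]
      have h3 : ∑ x ∈ Finset.range a, ξ * (ξ - 1)⁻¹ * (a.choose x : K) * ((h:K) ^ x * ξ ^ h)
          = ξ * (ξ - 1)⁻¹ * ξ^h * ∑ x ∈ Finset.range a, (h:K) ^ x * (a.choose x : K) := by
        rw [Finset.mul_sum]; exact Finset.sum_congr rfl fun x _ => by ring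
      rw [h3]
      field_simp
      ring
    simp only [Pi.sub_apply, Finset.sum_apply, Pi.smul_apply, smul_eq_mul]
    have hsum : (∑ j ∈ (Finset.range a).attach, cj j.1 * Gj j.1 (Finset.mem_range.mp j.2) (h+1))
        - (∑ j ∈ (Finset.range a).attach, cj j.1 * Gj j.1 (Finset.mem_range.mp j.2) h)
        = ∑ j ∈ Finset.range a, cj j * ((h:K)^j * ξ^h) := by
      rw [← Finset.sum_sub_distrib,
        ← Finset.sum_attach (Finset.range a) (fun j => cj j * ((h:K)^j * ξ^h))]
      refine Finset.sum_congr rfl fun j _ => ?_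
      rw [← mul_sub, hdj j.1 (Finset.mem_range.mp j.2) h]
    calc G₀ (h+1) - (∑ j ∈ (Finset.range a).attach, cj j.1 * Gj j.1 (Finset.mem_range.mp j.2) (h+1))
          - (G₀ h - ∑ j ∈ (Finset.range a).attach, cj j.1 * Gj j.1 (Finset.mem_range.mp j.2) h)
        = (G₀ (h+1) - G₀ h) - ((∑ j ∈ (Finset.range a).attach, cj j.1 * Gj j.1 (Finset.mem_range.mp j.2) (h+1)) - (∑ j ∈ (Finset.range a).attach, cj j.1 * Gj j.1 (Finset.mem_range.mp j.2) h)) := by ring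
      _ = (h : K) ^ a * ξ ^ h := by rw [hdelta0, hsum]; ring


end QP

section Sums
variable {K : Type*} [Field K] [CharZero K]

lemma sumRange_mem (c : ℕ) (ξ : K) (hξ : ξ ^ c = 1) (a : ℕ) :
    (fun h : ℕ => ∑ v ∈ Finset.range h, ξ ^ v * (v : K) ^ a)
      ∈ Submodule.span K (qgen (K := K) c (a + 1)) := by
  obtain ⟨G, hG, hd⟩ := exists_delta c ξ hξ a
  have key : ∀ h : ℕ, ∑ v ∈ Finset.range h, ξ ^ v * (v : K) ^ a = G h - G 0 := by
    intro h
    induction h with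
    | zero => simp
    | succ n ih =>
      rw [Finset.sum_range_succ, ih]
      linear_combination -hd n
  have : (fun h : ℕ => ∑ v ∈ Finset.range h, ξ ^ v * (v : K) ^ a)
      = G - (G 0) • (fun h : ℕ => (h : K) ^ 0 * (1:K) ^ h) := by
    funext h
    simp [key h]
  rw [this]
  exact Submodule.sub_mem _ hG (Submodule.smul_mem _ _
    (Submodule.subset_span ⟨0, 1, Nat.zero_le _, one_pow c, rfl⟩))

lemma isQ_sumRange (c : ℕ) (ξ : K) (hξ : ξ ^ c = 1) (a : ℕ) :
    IsQ c (a + 1) (fun h : ℕ => ∑ v ∈ Finset.range h, ξ ^ v * (v : K) ^ a) :=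
  isQ_of_mem (sumRange_mem c ξ hξ a)

lemma isQ_sumIco (c : ℕ) (ξ : K) (hξ : ξ ^ c = 1) (a : ℕ) :
    IsQ c (a + 1) (fun h : ℕ => ∑ v ∈ Finset.Ico 1 h, ξ ^ v * (v : K) ^ a) := by
  have h0 : IsQ c (a+1) (fun h : ℕ =>
      (∑ v ∈ Finset.range h, ξ ^ v * (v : K) ^ a) - (0:K) ^ a) := by
    obtain ⟨g, hg, he⟩ := isQ_sumRange c ξ hξ a
    have hcmem : ((0:K)^a) • (fun h : ℕ => (h : K) ^ 0 * (1:K) ^ h)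
        ∈ Submodule.span K (qgen (K := K) c (a+1)) :=
      Submodule.smul_mem _ _ (Submodule.subset_span ⟨0, 1, Nat.zero_le _, one_pow c, rfl⟩)
    refine ⟨g - ((0:K)^a) • (fun h : ℕ => (h : K) ^ 0 * (1:K) ^ h),
      Submodule.sub_mem _ hg hcmem, fun n hn => ?_⟩
    simp only [Pi.sub_apply, Pi.smul_apply, smul_eq_mul]
    rw [← he n hn]; simp
  refine h0.congr fun h hh => ?_
  have hins : Finset.range h = insert 0 (Finset.Ico 1 h) := by
    ext x; simp [Finset.mem_range, Finset.mem_Ico]; omega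
  rw [hins, Finset.sum_insert (by simp)]
  simp [pow_zero]

end Sums

section BQP
variable {K : Type*} [Field K] [CharZero K]

def bgen (c D : ℕ) : Set (ℕ → ℕ → K) :=
  {f | ∃ a b : ℕ, ∃ ζ ξ : K, a + b ≤ D ∧ ζ ^ c = 1 ∧ ξ ^ c = 1 ∧
    f = fun (h t : ℕ) => (h : K) ^ a * (t : K) ^ b * ζ ^ h * ξ ^ t}

lemma bgen_mono {c D D' : ℕ} (hD : D ≤ D') : bgen (K := K) c D ⊆ bgen c D' := by
  rintro f ⟨a, b, ζ, ξ, hab, hζ, hξ, rfl⟩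
  exact ⟨a, b, ζ, ξ, hab.trans hD, hζ, hξ, rfl⟩

def IsB (c D : ℕ) (f : ℕ → ℕ → K) : Prop :=
  ∃ g ∈ Submodule.span K (bgen (K := K) c D), ∀ h : ℕ, 1 ≤ h → ∀ t : ℕ, f h t = g h t

lemma IsB.mono {c D D' : ℕ} {f : ℕ → ℕ → K} (hD : D ≤ D') (hf : IsB c D f) : IsB c D' f := by
  obtain ⟨g, hg, he⟩ := hf
  exact ⟨g, Submodule.span_mono (bgen_mono hD) hg, he⟩

lemma IsB.congr {c D : ℕ} {f f' : ℕ → ℕ → K} (hf : IsB c D f)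
    (h : ∀ h : ℕ, 1 ≤ h → ∀ t : ℕ, f' h t = f h t) : IsB c D f' := by
  obtain ⟨g, hg, he⟩ := hf
  exact ⟨g, hg, fun n hn t => (h n hn t).trans (he n hn t)⟩

lemma IsB.tgen {c D : ℕ} {b : ℕ} {ξ : K} (hb : b ≤ D) (hξ : ξ ^ c = 1) :
    IsB c D (fun _ t => (t : K) ^ b * ξ ^ t) := by
  refine ⟨_, Submodule.subset_span (⟨0, b, 1, ξ, by omega, one_pow c, hξ, rfl⟩ :
    (fun (h t : ℕ) => (h : K) ^ 0 * (t : K) ^ b * (1:K) ^ h * ξ ^ t) ∈ bgen c D), ?_⟩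
  intro h _ t; simp

lemma IsB.smul {c D : ℕ} {f : ℕ → ℕ → K} (x : K) (hf : IsB c D f) :
    IsB c D (fun h t => x * f h t) := by
  obtain ⟨g, hg, he⟩ := hf
  exact ⟨x • g, Submodule.smul_mem _ _ hg, fun n hn t => by
    simp [Pi.smul_apply, smul_eq_mul, he n hn t]⟩

lemma IsB.mul {c D E : ℕ} {f₁ f₂ : ℕ → ℕ → K} (h₁ : IsB c D f₁) (h₂ : IsB c E f₂) :
    IsB c (D + E) (fun h t => f₁ h t * f₂ h t) := by
  obtain ⟨g₁, hg₁, he₁⟩ := h₁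
  obtain ⟨g₂, hg₂, he₂⟩ := h₂
  refine ⟨g₁ * g₂, ?_, fun n hn t => by simp [Pi.mul_apply, he₁ n hn t, he₂ n hn t]⟩
  have hmul : g₁ * g₂ ∈ Submodule.span K (bgen (K := K) c D) * Submodule.span K (bgen (K := K) c E) :=
    Submodule.mul_mem_mul hg₁ hg₂
  rw [Submodule.span_mul_span] at hmul
  refine Submodule.span_le.mpr ?_ hmul
  rintro x ⟨x₁, hx₁, x₂, hx₂, rfl⟩
  obtain ⟨a, b, ζ, ξ, hab, hζ, hξ, rfl⟩ := hx₁
  obtain ⟨a', b', ζ', ξ', hab', hζ', hξ', rfl⟩ := hx₂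
  refine Submodule.subset_span ⟨a + a', b + b', ζ * ζ', ξ * ξ', by omega,
    by rw [mul_pow, hζ, hζ', one_mul], by rw [mul_pow, hξ, hξ', one_mul], ?_⟩
  funext h t
  simp only [Pi.mul_apply]
  rw [pow_add, pow_add, mul_pow, mul_pow]
  ring

lemma IsB.finsetSum {c D : ℕ} {ι : Type*} {s : Finset ι} {F : ι → ℕ → ℕ → K}
    (hF : ∀ i ∈ s, IsB c D (F i)) : IsB c D (fun h t => ∑ i ∈ s, F i h t) := by
  choose g hg he using hF
  refine ⟨∑ i ∈ s.attach, g i.1 i.2, Submodule.sum_mem _ (fun i _ => hg i.1 i.2), fun n hn t => ?_⟩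
  show ∑ i ∈ s, F i n t = _
  rw [Finset.sum_apply, Finset.sum_apply, ← Finset.sum_attach s (fun i => F i n t)]
  exact Finset.sum_congr rfl fun i _ => he i.1 i.2 n hn t

/-- lift a quasipolynomial in `h` to a bi-quasipolynomial -/
lemma IsQ.liftB {c L : ℕ} {f : ℕ → K} (hf : IsQ c L f) : IsB c L (fun h _ => f h) := by
  obtain ⟨g, hg, he⟩ := hf
  let Φ : (ℕ → K) →ₗ[K] (ℕ → ℕ → K) :=
    { toFun := fun g => fun h _ => g h
      map_add' := fun x y => rfl
      map_smul' := fun m x => rfl }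
  refine ⟨Φ g, ?_, fun n hn t => he n hn⟩
  have : Φ g ∈ Submodule.map Φ (Submodule.span K (qgen (K := K) c L)) :=
    Submodule.mem_map_of_mem hg
  rw [Submodule.map_span] at this
  refine Submodule.span_le.mpr ?_ this
  rintro x ⟨y, ⟨a, ξ, ha, hξ, rfl⟩, rfl⟩
  refine Submodule.subset_span ⟨a, 0, ξ, 1, by omega, hξ, one_pow c, ?_⟩
  funext h t
  show (h : K) ^ a * ξ ^ h = _
  simp

end BQP
section Shift
variable {K : Type*} [Field K] [CharZero K]

lemma sum_shift (c : ℕ) (μ : K) (hμ : μ ^ c = 1) (κ m : ℕ) :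
    IsB c (m + 1) (fun h t : ℕ =>
      ∑ v ∈ Finset.Ico 1 h, μ ^ (t + κ * h + v) * ((t + κ * h + v : ℕ) : K) ^ m) := by
  have hμκ : (μ ^ κ) ^ c = 1 := by rw [← pow_mul, mul_comm, pow_mul, hμ, one_pow]
  -- the expanded form
  set F : ℕ → ℕ → ℕ → ℕ → K := fun q j h t =>
    ((m.choose q * (m - q).choose j * κ ^ j : ℕ) : K) *
      (((t : K) ^ q * μ ^ t) *
        ((((h : K) ^ j) * ((μ ^ κ) ^ h)) * (∑ v ∈ Finset.Ico 1 h, μ ^ v * (v : K) ^ (m - q - j))))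
    with hF
  have hFisB : ∀ q ∈ Finset.range (m+1), ∀ j ∈ Finset.range (m - q + 1),
      IsB c (m + 1) (fun h t => F q j h t) := by
    intro q hq j hj
    rw [Finset.mem_range] at hq hj
    have hQ : IsQ c (j + 0 + (m - q - j + 1)) (fun h : ℕ =>
        (((h : K) ^ j) * ((μ ^ κ) ^ h)) * (∑ v ∈ Finset.Ico 1 h, μ ^ v * (v : K) ^ (m - q - j))) :=
      ((IsQ.hpow (le_refl j)).mul (IsQ.rootpow hμκ)).mul (isQ_sumIco c μ hμ (m - q - j))
    have hB : IsB c (q + (j + 0 + (m - q - j + 1))) (fun h t =>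
        ((t : K) ^ q * μ ^ t) *
          ((((h : K) ^ j) * ((μ ^ κ) ^ h)) * (∑ v ∈ Finset.Ico 1 h, μ ^ v * (v : K) ^ (m - q - j)))) :=
      (IsB.tgen (le_refl q) hμ).mul hQ.liftB
    exact (hB.smul _).mono (by omega)
  have hsum : IsB c (m + 1) (fun h t =>
      ∑ q ∈ Finset.range (m+1), ∑ j ∈ Finset.range (m - q + 1), F q j h t) :=
    IsB.finsetSum (fun q hq => IsB.finsetSum (fun j hj => hFisB q hq j hj))
  refine hsum.congr ?_
  intro h _ t
  -- pure algebraic identity, valid for all h t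
  have per_v : ∀ v : ℕ, μ ^ (t + κ * h + v) * ((t + κ * h + v : ℕ) : K) ^ m =
      ∑ q ∈ Finset.range (m+1), ∑ j ∈ Finset.range (m - q + 1),
        ((m.choose q * (m - q).choose j * κ ^ j : ℕ) : K) *
          ((t : K) ^ q * μ ^ t) * (((h : K) ^ j) * ((μ ^ κ) ^ h)) *
          (μ ^ v * (v : K) ^ (m - q - j)) := by
    intro v
    have cast1 : ((t + κ * h + v : ℕ) : K) = (t : K) + ((κ * h + v : ℕ) : K) := by
      push_cast; ring
    have hexp : μ ^ (t + κ * h + v) = μ ^ t * (μ ^ κ) ^ h * μ ^ v := by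
      rw [pow_add, pow_add, pow_mul]
    rw [cast1, add_pow, hexp, Finset.mul_sum]
    refine Finset.sum_congr rfl fun q hq => ?_
    rw [Finset.mem_range] at hq
    have cast2 : ((κ * h + v : ℕ) : K) = ((κ * h : ℕ) : K) + (v : K) := by push_cast; ring
    rw [cast2, add_pow]
    simp only [Finset.mul_sum, Finset.sum_mul]
    refine Finset.sum_congr rfl fun j hj => ?_
    push_cast
    ring
  calc (∑ v ∈ Finset.Ico 1 h, μ ^ (t + κ * h + v) * ((t + κ * h + v : ℕ) : K) ^ m)
      = ∑ v ∈ Finset.Ico 1 h, ∑ q ∈ Finset.range (m+1), ∑ j ∈ Finset.range (m - q + 1),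
          ((m.choose q * (m - q).choose j * κ ^ j : ℕ) : K) *
            ((t : K) ^ q * μ ^ t) * (((h : K) ^ j) * ((μ ^ κ) ^ h)) *
            (μ ^ v * (v : K) ^ (m - q - j)) := Finset.sum_congr rfl fun v _ => per_v v
    _ = ∑ q ∈ Finset.range (m+1), ∑ v ∈ Finset.Ico 1 h, ∑ j ∈ Finset.range (m - q + 1),
          ((m.choose q * (m - q).choose j * κ ^ j : ℕ) : K) *
            ((t : K) ^ q * μ ^ t) * (((h : K) ^ j) * ((μ ^ κ) ^ h)) *
            (μ ^ v * (v : K) ^ (m - q - j)) := Finset.sum_comm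
    _ = ∑ q ∈ Finset.range (m+1), ∑ j ∈ Finset.range (m - q + 1), ∑ v ∈ Finset.Ico 1 h,
          ((m.choose q * (m - q).choose j * κ ^ j : ℕ) : K) *
            ((t : K) ^ q * μ ^ t) * (((h : K) ^ j) * ((μ ^ κ) ^ h)) *
            (μ ^ v * (v : K) ^ (m - q - j)) := Finset.sum_congr rfl fun q _ => Finset.sum_comm
    _ = ∑ q ∈ Finset.range (m+1), ∑ j ∈ Finset.range (m - q + 1), F q j h t := by
        refine Finset.sum_congr rfl fun q _ => Finset.sum_congr rfl fun j _ => ?_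
        simp only [hF]
        rw [show ((m.choose q * (m - q).choose j * κ ^ j : ℕ) : K) *
          (((t : K) ^ q * μ ^ t) *
            ((((h : K) ^ j) * ((μ ^ κ) ^ h)) * (∑ v ∈ Finset.Ico 1 h, μ ^ v * (v : K) ^ (m - q - j))))
          = (((m.choose q * (m - q).choose j * κ ^ j : ℕ) : K) *
            ((t : K) ^ q * μ ^ t) * (((h : K) ^ j) * ((μ ^ κ) ^ h))) *
            (∑ v ∈ Finset.Ico 1 h, μ ^ v * (v : K) ^ (m - q - j)) from by ring,
          Finset.mul_sum]

end Shift
section Chain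

/-- previous entry with convention `u_{-1} = t` -/
def prevT {n : ℕ} (t : ℕ) (u : Fin n → ℕ) (j : Fin n) : ℕ :=
  if _h : 0 < (j : ℕ) then u ⟨(j : ℕ) - 1, lt_of_le_of_lt (Nat.sub_le _ _) j.isLt⟩ else t

def chainP {n : ℕ} (h t : ℕ) (κ : Fin n → ℕ) (u : Fin n → ℕ) : Prop :=
  ∀ j : Fin n, prevT t u j + κ j * h < u j ∧ u j < prevT t u j + (κ j + 1) * h

lemma cons_mk_succ {n : ℕ} (x : ℕ) (v : Fin n → ℕ) (k : ℕ) (hk : k + 1 < n + 1) :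
    Fin.cons (α := fun _ => ℕ) x v ⟨k + 1, hk⟩ = v ⟨k, by omega⟩ := by
  rw [show (⟨k + 1, hk⟩ : Fin (n+1)) = Fin.succ ⟨k, by omega⟩ from rfl, Fin.cons_succ]

lemma prevT_cons {n : ℕ} (t x : ℕ) (v : Fin n → ℕ) (j : Fin n) :
    prevT t (Fin.cons x v) j.succ = prevT x v j := by
  rcases j with ⟨jv, hj⟩
  cases jv with
  | zero =>
    rw [prevT, prevT]
    simp only [Fin.succ_mk, Nat.succ_sub_one, dif_pos (Nat.succ_pos 0), dif_neg (lt_irrefl 0)]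
    exact Fin.cons_zero (α := fun _ => ℕ) x v
  | succ k =>
    rw [prevT, prevT]
    simp only [Fin.succ_mk, Nat.succ_sub_one, dif_pos (Nat.succ_pos _)]
    exact cons_mk_succ x v k (by omega)

lemma prevT_zero {n : ℕ} (t x : ℕ) (v : Fin n → ℕ) :
    prevT t (Fin.cons x v) 0 = t := by
  rw [prevT]; simp

lemma chainP_cons {n : ℕ} (h t x : ℕ) (κ : Fin (n+1) → ℕ) (v : Fin n → ℕ) :
    chainP h t κ (Fin.cons x v) ↔
      ((t + κ 0 * h < x ∧ x < t + (κ 0 + 1) * h) ∧ chainP h x (fun j => κ j.succ) v) := by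
  constructor
  · intro hc
    refine ⟨?_, fun j => ?_⟩
    · have := hc 0
      rwa [prevT_zero, Fin.cons_zero] at this
    · have := hc j.succ
      rwa [prevT_cons, Fin.cons_succ] at this
  · rintro ⟨h0, hrest⟩ j
    rcases Fin.eq_zero_or_eq_succ j with rfl | ⟨j', rfl⟩
    · rwa [prevT_zero, Fin.cons_zero]
    · have := hrest j'
      rwa [prevT_cons, Fin.cons_succ]

lemma chain_bound {n : ℕ} {h t : ℕ} {κ : Fin n → ℕ} {u : Fin n → ℕ}
    (hc : chainP h t κ u) (j : Fin n) : u j ≤ t + (∑ i, (κ i + 1)) * h := by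
  suffices H : ∀ m : ℕ, ∀ j : Fin n, (j : ℕ) ≤ m →
      u j ≤ t + (∑ i ∈ Finset.univ.filter (fun i : Fin n => (i : ℕ) ≤ (j : ℕ)), (κ i + 1)) * h by
    refine (H j j le_rfl).trans ?_
    have : (∑ i ∈ Finset.univ.filter (fun i : Fin n => (i : ℕ) ≤ (j : ℕ)), (κ i + 1))
        ≤ ∑ i, (κ i + 1) :=
      Finset.sum_le_sum_of_subset (Finset.filter_subset _ _)
    exact Nat.add_le_add_left (Nat.mul_le_mul_right h this) t
  intro m
  induction m with
  | zero =>
    intro j hj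
    have hj0 : (j : ℕ) = 0 := Nat.le_zero.mp hj
    have hprev : prevT t u j = t := by rw [prevT]; simp [hj0]
    have := (hc j).2
    rw [hprev] at this
    have hone : κ j + 1 ≤ ∑ i ∈ Finset.univ.filter (fun i : Fin n => (i : ℕ) ≤ (j : ℕ)), (κ i + 1) :=
      Finset.single_le_sum (f := fun i => κ i + 1) (fun _ _ => Nat.zero_le _) (Finset.mem_filter.mpr ⟨Finset.mem_univ j, le_rfl⟩)
    calc u j ≤ t + (κ j + 1) * h := Nat.le_of_lt_succ (by omega)
      _ ≤ _ := Nat.add_le_add_left (Nat.mul_le_mul_right h hone) t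
  | succ m IH =>
    intro j hj
    rcases Nat.lt_or_ge (j : ℕ) (m + 1) with hlt | hge
    · exact IH j (by omega)
    · have hjm : (j : ℕ) = m + 1 := by omega
      have hmlt : m < n := by omega
      set j' : Fin n := ⟨m, hmlt⟩ with hj'
      have hprev : prevT t u j = u j' := by
        rw [prevT]
        simp only [dif_pos (by omega : 0 < (j : ℕ))]
        congr 1
        apply Fin.ext; simp [hjm, hj']
      have hu' : u j' ≤ t + (∑ i ∈ Finset.univ.filter (fun i : Fin n => (i : ℕ) ≤ m), (κ i + 1)) * h :=
        IH j' le_rfl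
      have hstep := (hc j).2
      rw [hprev] at hstep
      have hset : Finset.univ.filter (fun i : Fin n => (i : ℕ) ≤ (j : ℕ))
          = insert j (Finset.univ.filter (fun i : Fin n => (i : ℕ) ≤ m)) := by
        ext i
        simp only [Finset.mem_filter, Finset.mem_univ, true_and, Finset.mem_insert]
        constructor
        · intro hi
          rcases Nat.lt_or_ge (i : ℕ) (m + 1) with h1 | h1
          · exact Or.inr (by omega)
          · exact Or.inl (Fin.ext (by omega))
        · rintro (rfl | hi)
          · exact le_rfl
          · omega
      rw [hset, Finset.sum_insert (by simp only [Finset.mem_filter, Finset.mem_univ, true_and]; omega)]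
      calc u j ≤ u j' + (κ j + 1) * h := Nat.le_of_lt_succ (by omega)
        _ ≤ t + (∑ i ∈ Finset.univ.filter (fun i : Fin n => (i : ℕ) ≤ m), (κ i + 1)) * h + (κ j + 1) * h := by omega
        _ = t + ((κ j + 1) + ∑ i ∈ Finset.univ.filter (fun i : Fin n => (i : ℕ) ≤ m), (κ i + 1)) * h := by ring

lemma chain_box {n : ℕ} (h t : ℕ) (κ : Fin n → ℕ) {N N' : ℕ}
    (hN : t + (∑ i, (κ i + 1)) * h + 1 ≤ N) (hN' : t + (∑ i, (κ i + 1)) * h + 1 ≤ N') :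
    (Fintype.piFinset fun _ : Fin n => Finset.range N).filter (chainP h t κ)
      = (Fintype.piFinset fun _ : Fin n => Finset.range N').filter (chainP h t κ) := by
  ext u
  simp only [Finset.mem_filter, Fintype.mem_piFinset, Finset.mem_range]
  constructor
  · rintro ⟨_, hP⟩
    exact ⟨fun i => by have := chain_bound hP i; omega, hP⟩
  · rintro ⟨_, hP⟩
    exact ⟨fun i => by have := chain_bound hP i; omega, hP⟩

end Chain

section Peel
variable {M : Type*} [AddCommMonoid M]

lemma sum_piFinset_succ {n N : ℕ} (f : (Fin (n+1) → ℕ) → M) :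
    ∑ u ∈ Fintype.piFinset (fun _ : Fin (n+1) => Finset.range N), f u
      = ∑ x ∈ Finset.range N, ∑ v ∈ Fintype.piFinset (fun _ : Fin n => Finset.range N),
          f (Fin.cons x v) := by
  rw [← Finset.sum_product']
  refine Finset.sum_nbij' (i := fun u => ((u 0 : ℕ), Fin.tail u))
    (j := fun p => Fin.cons p.1 p.2) ?_ ?_ ?_ ?_ ?_
  · intro u hu
    rw [Fintype.mem_piFinset] at hu
    rw [Finset.mem_product]
    exact ⟨hu 0, Fintype.mem_piFinset.mpr fun i => hu i.succ⟩
  · intro p hp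
    rw [Finset.mem_product] at hp
    rw [Fintype.mem_piFinset]
    intro i
    show Fin.cons (α := fun _ => ℕ) p.1 p.2 i ∈ Finset.range N
    refine Fin.cases ?_ ?_ i
    · rw [Fin.cons_zero]; exact hp.1
    · intro i'; rw [Fin.cons_succ]; exact Fintype.mem_piFinset.mp hp.2 i'
  · intro u _; exact Fin.cons_self_tail u
  · intro p _; simp
  · intro u _; rw [Fin.cons_self_tail]

lemma sum_filter_piFinset_cons {n N : ℕ} (P : (Fin (n+1) → ℕ) → Prop)
    [instP : DecidablePred P] [instC : ∀ x : ℕ, DecidablePred fun v : Fin n → ℕ => P (Fin.cons x v)]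
    (f : (Fin (n+1) → ℕ) → M) :
    ∑ u ∈ (Fintype.piFinset fun _ : Fin (n+1) => Finset.range N).filter P, f u
      = ∑ x ∈ Finset.range N,
          ∑ v ∈ (Fintype.piFinset fun _ : Fin n => Finset.range N).filter
              (fun v => P (Fin.cons x v)), f (Fin.cons x v) := by
  rw [Finset.sum_filter, sum_piFinset_succ]
  refine Finset.sum_congr rfl fun x _ => ?_
  rw [Finset.sum_filter]
  exact Finset.sum_congr rfl fun v _ => by congr

end Peel
section ChainSum
variable {K : Type*} [Field K] [CharZero K]

lemma IsB.one (c D : ℕ) : IsB c D (fun _ _ : ℕ => (1:K)) :=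
  (IsB.tgen (Nat.zero_le D) (one_pow c)).congr (fun h _ t => by simp)

lemma chainSum_isB (c : ℕ) (n : ℕ) (l κ : Fin n → ℕ) (η : Fin n → K)
    (hη : ∀ j, η j ^ c = 1) :
    IsB c (∑ j, (l j + 1)) (fun h t : ℕ =>
      ∑ u ∈ (Fintype.piFinset fun _ : Fin n => Finset.range (t + (∑ j, (κ j + 1)) * h + 1)).filter
          (chainP h t κ),
        ∏ j, η j ^ u j * ((u j : ℕ) : K) ^ l j) := by
  induction n with
  | zero =>
    refine (IsB.one c _).congr ?_
    intro h _ t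
    have h1 : ∀ u : Fin 0 → ℕ, (∏ j : Fin 0, η j ^ u j * ((u j : ℕ) : K) ^ l j) = 1 :=
      fun u => Finset.prod_of_isEmpty _
    rw [Finset.sum_congr rfl (fun u _ => h1 u), Finset.sum_const]
    have hfil : ((Fintype.piFinset fun _ : Fin 0 =>
        Finset.range (t + (∑ j, (κ j + 1)) * h + 1)).filter (chainP h t κ))
        = (Fintype.piFinset fun _ : Fin 0 => Finset.range (t + (∑ j, (κ j + 1)) * h + 1)) :=
      Finset.filter_true_of_mem (fun u _ => fun j => j.elim0)
    rw [hfil, Fintype.card_piFinset]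
    simp
  | succ n IH =>
    have hIH := IH (fun j => l j.succ) (fun j => κ j.succ) (fun j => η j.succ)
      (fun j => hη j.succ)
    set D' := ∑ j : Fin n, (l j.succ + 1) with hD'
    obtain ⟨g, hgmem, hgeq⟩ := hIH
    obtain ⟨k, coef, gen, hrep⟩ := Submodule.mem_span_set'.mp hgmem
    have hgen : ∀ i : Fin k, ∃ a b : ℕ, ∃ ζ ξ : K, a + b ≤ D' ∧ ζ ^ c = 1 ∧ ξ ^ c = 1 ∧
        (gen i : ℕ → ℕ → K) = fun h t : ℕ => (h:K)^a * (t:K)^b * ζ^h * ξ^t := fun i => (gen i).2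
    choose A B Z X hAB hZ hX hgeneq using hgen
    have hdeg : ∑ j : Fin (n+1), (l j + 1) = (l 0 + 1) + D' := by
      rw [Fin.sum_univ_succ]
    have main : IsB c (∑ j : Fin (n+1), (l j + 1)) (fun h t : ℕ =>
        ∑ i : Fin k, coef i * (((h:K)^(A i) * (Z i)^h) *
          (∑ v ∈ Finset.Ico 1 h, (η 0 * X i)^(t + κ 0 * h + v)
            * ((t + κ 0 * h + v : ℕ):K)^(l 0 + B i)))) := by
      refine IsB.finsetSum (fun i _ => ?_)
      have hμ : (η 0 * X i) ^ c = 1 := by rw [mul_pow, hη 0, hX i, one_mul]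
      have hQ : IsQ c (A i) (fun h : ℕ => (h:K)^(A i) * (Z i)^h) :=
        IsQ.monomial (le_refl _) (hZ i)
      have hprod := hQ.liftB.mul (sum_shift c (η 0 * X i) hμ (κ 0) (l 0 + B i))
      have := hprod.smul (coef i)
      refine this.mono ?_
      have := hAB i
      omega
    refine main.congr ?_
    intro h hh t
    set κs : Fin n → ℕ := fun j => κ j.succ with hκs
    set M' : ℕ := ∑ j : Fin n, (κs j + 1) with hM'
    set N : ℕ := t + (∑ j : Fin (n+1), (κ j + 1)) * h + 1 with hN
    have hM : (∑ j : Fin (n+1), (κ j + 1)) = (κ 0 + 1) + M' := by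
      rw [Fin.sum_univ_succ]
    have hmul1 : (κ 0 + 1) * h = κ 0 * h + h := by ring
    have hmul2 : ((κ 0 + 1) + M') * h = (κ 0 + 1) * h + M' * h := by ring
    set W0 : ℕ → K := fun x => η 0 ^ x * (x : K) ^ l 0 with hW0
    set Wt : (Fin n → ℕ) → K :=
      fun v => ∏ j : Fin n, η j.succ ^ v j * ((v j : ℕ) : K) ^ l j.succ with hWt
    set T : ℕ → K := fun x =>
      ∑ v ∈ (Fintype.piFinset fun _ : Fin n => Finset.range N).filter (chainP h x κs), Wt v
      with hT
    set lo : ℕ := t + κ 0 * h with hlo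
    have hloh : lo + h ≤ N := by
      rw [hlo, hN, hM, hmul2, hmul1]; omega
    have step2 : ∀ x, lo < x → x < lo + h →
        T x = ∑ i : Fin k, coef i * ((h:K)^(A i) * (x:K)^(B i) * (Z i)^h * (X i)^x) := by
      intro x hx1 hx2
      have hbox : (Fintype.piFinset fun _ : Fin n => Finset.range N).filter (chainP h x κs)
          = (Fintype.piFinset fun _ : Fin n =>
              Finset.range (x + (∑ j : Fin n, (κs j + 1)) * h + 1)).filter (chainP h x κs) := by
        refine chain_box h x κs ?_ (le_refl _)
        rw [← hM']
        rw [hN, hM, hmul2, hmul1] at *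
        omega
      have e1 : (∑ v ∈ (Fintype.piFinset fun _ : Fin n =>
            Finset.range (x + (∑ j : Fin n, (κs j + 1)) * h + 1)).filter (chainP h x κs), Wt v)
          = g h x := hgeq h hh x
      have e2 : g h x = ∑ i : Fin k, coef i * ((h:K)^(A i) * (x:K)^(B i) * (Z i)^h * (X i)^x) := by
        rw [← hrep]
        rw [Finset.sum_apply, Finset.sum_apply]
        refine Finset.sum_congr rfl fun i _ => ?_
        rw [Pi.smul_apply, Pi.smul_apply, smul_eq_mul, hgeneq i]
      show (∑ v ∈ (Fintype.piFinset fun _ : Fin n => Finset.range N).filter (chainP h x κs),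
        Wt v) = _
      rw [hbox, e1, e2]
    have perx : ∀ x ∈ Finset.range N,
        (∑ v ∈ (Fintype.piFinset fun _ : Fin n => Finset.range N).filter
            (fun v => chainP h t κ (Fin.cons x v)),
          ∏ j : Fin (n+1), η j ^ (Fin.cons (α := fun _ => ℕ) x v j) * ((Fin.cons (α := fun _ => ℕ) x v j : ℕ) : K) ^ l j)
          = if lo < x ∧ x < lo + h then W0 x * T x else 0 := by
      intro x _
      have harith : t + (κ 0 + 1) * h = lo + h := by rw [hlo]; ring
      have hfil : (Fintype.piFinset fun _ : Fin n => Finset.range N).filter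
            (fun v => chainP h t κ (Fin.cons x v))
          = if lo < x ∧ x < lo + h then
              (Fintype.piFinset fun _ : Fin n => Finset.range N).filter (chainP h x κs) else ∅ := by
        split_ifs with hcond
        · refine Finset.filter_congr fun v _ => ?_
          rw [chainP_cons]
          constructor
          · rintro ⟨_, h2⟩; exact h2
          · intro h2; exact ⟨⟨by omega, by omega⟩, h2⟩
        · refine Finset.filter_false_of_mem fun v _ => ?_
          rw [chainP_cons]
          rintro ⟨⟨hc1, hc2⟩, _⟩
          rw [harith] at hc2
          exact hcond ⟨hc1, hc2⟩
      rw [hfil]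
      split_ifs with hcond
      · rw [hT, Finset.mul_sum]
        refine Finset.sum_congr rfl fun v _ => ?_
        rw [Fin.prod_univ_succ]
        simp only [Fin.cons_zero, Fin.cons_succ]
        rfl
      · simp
    have hIcoeq : (Finset.range N).filter (fun x => lo < x ∧ x < lo + h)
        = Finset.Ico (lo + 1) (lo + h) := by
      ext z
      simp only [Finset.mem_filter, Finset.mem_range, Finset.mem_Ico]
      omega
    calc (∑ u ∈ (Fintype.piFinset fun _ : Fin (n+1) => Finset.range N).filter (chainP h t κ),
            ∏ j : Fin (n+1), η j ^ u j * ((u j : ℕ) : K) ^ l j)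
        = ∑ x ∈ Finset.range N,
            ∑ v ∈ (Fintype.piFinset fun _ : Fin n => Finset.range N).filter
                (fun v => chainP h t κ (Fin.cons x v)),
              ∏ j : Fin (n+1), η j ^ (Fin.cons (α := fun _ => ℕ) x v j) * ((Fin.cons (α := fun _ => ℕ) x v j : ℕ) : K) ^ l j :=
          sum_filter_piFinset_cons _ _
      _ = ∑ x ∈ Finset.range N, (if lo < x ∧ x < lo + h then W0 x * T x else 0) :=
          Finset.sum_congr rfl perx
      _ = ∑ x ∈ (Finset.range N).filter (fun x => lo < x ∧ x < lo + h), W0 x * T x :=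
          (Finset.sum_filter _ _).symm
      _ = ∑ x ∈ Finset.Ico (lo + 1) (lo + h), W0 x * T x := by rw [hIcoeq]
      _ = ∑ x ∈ Finset.Ico (lo + 1) (lo + h), ∑ i : Fin k,
            coef i * (((h:K)^(A i) * (Z i)^h) * ((η 0 * X i)^x * (x:K)^(l 0 + B i))) := by
          refine Finset.sum_congr rfl fun x hx => ?_
          rw [Finset.mem_Ico] at hx
          rw [step2 x (by omega) (by omega), Finset.mul_sum]
          refine Finset.sum_congr rfl fun i _ => ?_
          rw [hW0, mul_pow, pow_add]
          ring
      _ = ∑ i : Fin k, ∑ x ∈ Finset.Ico (lo + 1) (lo + h),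
            coef i * (((h:K)^(A i) * (Z i)^h) * ((η 0 * X i)^x * (x:K)^(l 0 + B i))) :=
          Finset.sum_comm
      _ = ∑ i : Fin k, coef i * (((h:K)^(A i) * (Z i)^h) *
            (∑ x ∈ Finset.Ico (lo + 1) (lo + h), (η 0 * X i)^x * (x:K)^(l 0 + B i))) := by
          refine Finset.sum_congr rfl fun i _ => ?_
          rw [Finset.mul_sum, Finset.mul_sum]
      _ = ∑ i : Fin k, coef i * (((h:K)^(A i) * (Z i)^h) *
            (∑ v ∈ Finset.Ico 1 h, (η 0 * X i)^(lo + v) * ((lo + v : ℕ):K)^(l 0 + B i))) := by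
          refine Finset.sum_congr rfl fun i _ => ?_
          congr 1
          congr 1
          rw [← Finset.map_add_left_Ico 1 h lo, Finset.sum_map]
          refine Finset.sum_congr rfl fun v _ => ?_
          simp [addLeftEmbedding_apply]

end ChainSum

set_option maxHeartbeats 2000000 in
/-- The gapped twisted multiple power sum
`S_h = ∑_{u_1<h, u_{i-1}+κ_{i-1}h < u_i < u_{i-1}+(κ_{i-1}+1)h}
(ε_2/ε_1)^{u_1}⋯(1/ε_r)^{u_r} u_1^{l_1}⋯u_r^{l_r}`
is quasi-polynomial in `h`: there are coefficients `B_{l,ξ} ∈ ℚ(μ_c)`, for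
`0 ≤ l ≤ l_1+⋯+l_r+r` and `ξ ∈ μ_c`, with `S_h = ∑_{l,ξ} B_{l,ξ} h^l ξ^h` for all `h ≥ 1`. -/
theorem gapped_sum_quasi_polynomial {K : Type*} [Field K] [CharZero K]
    (c r : ℕ) (hc : 0 < c) (hr : 0 < r)
    (l : Fin r → ℕ) (κ : Fin r → ℕ) (ε : Fin r → K) (hε : ∀ i, ε i ^ c = 1) :
    ∃ B : ℕ → K → K,
      ∀ h : ℕ, 0 < h →
        (∑ u ∈ (Fintype.piFinset fun _ : Fin r => Finset.range ((∑ i, (κ i + 1)) * h + 1)).filter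
            (fun u => u ⟨0, hr⟩ < h ∧
              ∀ i : Fin r, 0 < (i : ℕ) →
                (prevOr0 u i + κ ⟨(i : ℕ) - 1, lt_of_le_of_lt (Nat.sub_le _ _) i.isLt⟩ * h < u i ∧
                 u i < prevOr0 u i +
                   (κ ⟨(i : ℕ) - 1, lt_of_le_of_lt (Nat.sub_le _ _) i.isLt⟩ + 1) * h)),
          ∏ i : Fin r,
            ((if hi : (i : ℕ) + 1 < r then ε ⟨(i : ℕ) + 1, hi⟩ else 1) / ε i) ^ u i *
              (u i : K) ^ l i) =
        ∑ l' ∈ Finset.range (∑ i, l i + r + 1), ∑ ξ ∈ Polynomial.nthRootsFinset c (1 : K),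
          B l' ξ * (h : K) ^ l' * ξ ^ h := by
  obtain ⟨n, rfl⟩ : ∃ n, r = n + 1 := ⟨r - 1, by omega⟩
  set δ : Fin (n+1) → K := fun i =>
    (if hi : (i : ℕ) + 1 < n + 1 then ε ⟨(i : ℕ) + 1, hi⟩ else 1) / ε i with hδdef
  have hδc : ∀ i, δ i ^ c = 1 := by
    intro i
    rw [hδdef]
    simp only
    rw [div_pow]
    split_ifs with hi
    · rw [hε, hε, div_one]
    · rw [one_pow, hε, div_one]
  set κC : Fin n → ℕ := fun j => κ (Fin.castSucc j) with hκC
  set L : ℕ := ∑ j : Fin (n+1), (l j + 1) with hL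
  have hLL : L = ∑ i, l i + (n+1) := by
    rw [hL, Finset.sum_add_distrib]
    simp [Finset.card_univ]
  -- the IH-style chain sum for the tail
  have hIH := chainSum_isB c n (fun j => l j.succ) κC (fun j => δ j.succ) (fun j => hδc j.succ)
  set D' : ℕ := ∑ j : Fin n, (l j.succ + 1) with hD'
  obtain ⟨g, hgmem, hgeq⟩ := hIH
  obtain ⟨k, coef, gen, hrep⟩ := Submodule.mem_span_set'.mp hgmem
  have hgen : ∀ i : Fin k, ∃ a b : ℕ, ∃ ζ ξ : K, a + b ≤ D' ∧ ζ ^ c = 1 ∧ ξ ^ c = 1 ∧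
      (gen i : ℕ → ℕ → K) = fun h t : ℕ => (h:K)^a * (t:K)^b * ζ^h * ξ^t := fun i => (gen i).2
  choose A B Z X hAB hZ hX hgeneq using hgen
  have hdeg : L = l 0 + 1 + D' := by rw [hL, Fin.sum_univ_succ]
  -- the quasi-polynomial candidate
  have mainQ : IsQ c L (fun h : ℕ =>
      ∑ i : Fin k, coef i * (((h:K)^(A i) * (Z i)^h) *
        (∑ x ∈ Finset.range h, (δ 0 * X i)^x * (x:K)^(l 0 + B i)))) := by
    refine IsQ.finsetSum (fun i _ => ?_)
    have hμ : (δ 0 * X i) ^ c = 1 := by rw [mul_pow, hδc 0, hX i, one_mul]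
    have hQ : IsQ c (A i) (fun h : ℕ => (h:K)^(A i) * (Z i)^h) :=
      IsQ.monomial (le_refl _) (hZ i)
    have hprod := hQ.mul (isQ_sumRange c (δ 0 * X i) hμ (l 0 + B i))
    have h2 := hprod.smul (coef i)
    refine h2.mono ?_
    have := hAB i
    omega
  obtain ⟨gS, hgSmem, hSeq⟩ := mainQ
  -- main pointwise computation
  have hcompute : ∀ h : ℕ, 1 ≤ h →
      (∑ u ∈ (Fintype.piFinset fun _ : Fin (n+1) =>
          Finset.range ((∑ i, (κ i + 1)) * h + 1)).filter
          (fun u => u ⟨0, hr⟩ < h ∧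
            ∀ i : Fin (n+1), 0 < (i : ℕ) →
              (prevOr0 u i + κ ⟨(i : ℕ) - 1, lt_of_le_of_lt (Nat.sub_le _ _) i.isLt⟩ * h < u i ∧
               u i < prevOr0 u i +
                 (κ ⟨(i : ℕ) - 1, lt_of_le_of_lt (Nat.sub_le _ _) i.isLt⟩ + 1) * h)),
        ∏ i : Fin (n+1), δ i ^ u i * (u i : K) ^ l i)
      = ∑ i : Fin k, coef i * (((h:K)^(A i) * (Z i)^h) *
          (∑ x ∈ Finset.range h, (δ 0 * X i)^x * (x:K)^(l 0 + B i))) := by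
    intro h hh
    set M : ℕ := ∑ i : Fin (n+1), (κ i + 1) with hMdef
    set NB : ℕ := M * h + 1 with hNB
    set M' : ℕ := ∑ j : Fin n, (κC j + 1) with hM'
    have hMM' : M = M' + (κ (Fin.last n) + 1) := by
      rw [hMdef, hM', Fin.sum_univ_castSucc]
    set P : (Fin (n+1) → ℕ) → Prop := fun u => u ⟨0, hr⟩ < h ∧
        ∀ i : Fin (n+1), 0 < (i : ℕ) →
          (prevOr0 u i + κ ⟨(i : ℕ) - 1, lt_of_le_of_lt (Nat.sub_le _ _) i.isLt⟩ * h < u i ∧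
           u i < prevOr0 u i +
             (κ ⟨(i : ℕ) - 1, lt_of_le_of_lt (Nat.sub_le _ _) i.isLt⟩ + 1) * h) with hP
    have hPcons : ∀ (x : ℕ) (v : Fin n → ℕ),
        P (Fin.cons x v) ↔ (x < h ∧ chainP h x κC v) := by
      intro x v
      rw [hP]
      simp only
      constructor
      · rintro ⟨h0, hrest⟩
        refine ⟨h0, fun j => ?_⟩
        have h1 : (0 : ℕ) < ((j.succ : Fin (n+1)) : ℕ) := Nat.succ_pos _
        have h2 := hrest j.succ h1
        have hpe : prevOr0 (Fin.cons x v) j.succ = prevT x v j := prevT_cons 0 x v j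
        have hκe : κ ⟨((j.succ : Fin (n+1)) : ℕ) - 1,
            lt_of_le_of_lt (Nat.sub_le _ _) (j.succ).isLt⟩ = κC j := by
          rw [hκC]; congr 1
        rw [hpe, hκe, Fin.cons_succ] at h2
        exact h2
      · rintro ⟨h0, hrest⟩
        refine ⟨h0, fun i hi => ?_⟩
        rcases Fin.eq_zero_or_eq_succ i with rfl | ⟨j, rfl⟩
        · exact absurd hi (by simp)
        · have h2 := hrest j
          have hpe : prevOr0 (Fin.cons x v) j.succ = prevT x v j := prevT_cons 0 x v j
          have hκe : κ ⟨((j.succ : Fin (n+1)) : ℕ) - 1,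
              lt_of_le_of_lt (Nat.sub_le _ _) (j.succ).isLt⟩ = κC j := by
            rw [hκC]; congr 1
          rw [hpe, hκe, Fin.cons_succ]
          exact h2
    set W0 : ℕ → K := fun x => δ 0 ^ x * (x : K) ^ l 0 with hW0
    set Wt : (Fin n → ℕ) → K :=
      fun v => ∏ j : Fin n, δ j.succ ^ v j * ((v j : ℕ) : K) ^ l j.succ with hWt
    set T : ℕ → K := fun x =>
      ∑ v ∈ (Fintype.piFinset fun _ : Fin n => Finset.range NB).filter (chainP h x κC), Wt v
      with hT
    have step2 : ∀ x, x < h →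
        T x = ∑ i : Fin k, coef i * ((h:K)^(A i) * (x:K)^(B i) * (Z i)^h * (X i)^x) := by
      intro x hx
      have hbox : (Fintype.piFinset fun _ : Fin n => Finset.range NB).filter (chainP h x κC)
          = (Fintype.piFinset fun _ : Fin n =>
              Finset.range (x + (∑ j : Fin n, (κC j + 1)) * h + 1)).filter (chainP h x κC) := by
        refine chain_box h x κC ?_ (le_refl _)
        rw [← hM', hNB, hMM']
        have : (M' + (κ (Fin.last n) + 1)) * h = M' * h + (κ (Fin.last n) + 1) * h := by ring
        rw [this]
        have h2 : h ≤ (κ (Fin.last n) + 1) * h := Nat.le_mul_of_pos_left h (by omega)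
        omega
      have e1 : (∑ v ∈ (Fintype.piFinset fun _ : Fin n =>
            Finset.range (x + (∑ j : Fin n, (κC j + 1)) * h + 1)).filter (chainP h x κC), Wt v)
          = g h x := hgeq h hh x
      have e2 : g h x = ∑ i : Fin k, coef i * ((h:K)^(A i) * (x:K)^(B i) * (Z i)^h * (X i)^x) := by
        rw [← hrep, Finset.sum_apply, Finset.sum_apply]
        refine Finset.sum_congr rfl fun i _ => ?_
        rw [Pi.smul_apply, Pi.smul_apply, smul_eq_mul, hgeneq i]
      show (∑ v ∈ (Fintype.piFinset fun _ : Fin n => Finset.range NB).filter (chainP h x κC),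
        Wt v) = _
      rw [hbox, e1, e2]
    have perx : ∀ x ∈ Finset.range NB,
        (∑ v ∈ (Fintype.piFinset fun _ : Fin n => Finset.range NB).filter
            (fun v => P (Fin.cons x v)),
          ∏ j : Fin (n+1), δ j ^ (Fin.cons (α := fun _ => ℕ) x v j) *
            ((Fin.cons (α := fun _ => ℕ) x v j : ℕ) : K) ^ l j)
          = if x < h then W0 x * T x else 0 := by
      intro x _
      have hfil : (Fintype.piFinset fun _ : Fin n => Finset.range NB).filter
            (fun v => P (Fin.cons x v))
          = if x < h then
              (Fintype.piFinset fun _ : Fin n => Finset.range NB).filter (chainP h x κC)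
            else ∅ := by
        split_ifs with hcond
        · refine Finset.filter_congr fun v _ => ?_
          rw [hPcons]
          constructor
          · rintro ⟨_, h2⟩; exact h2
          · intro h2; exact ⟨hcond, h2⟩
        · refine Finset.filter_false_of_mem fun v _ => ?_
          rw [hPcons]
          rintro ⟨hc1, _⟩
          exact hcond hc1
      rw [hfil]
      split_ifs with hcond
      · rw [hT, Finset.mul_sum]
        refine Finset.sum_congr rfl fun v _ => ?_
        rw [Fin.prod_univ_succ]
        simp only [Fin.cons_zero, Fin.cons_succ]
        rfl
      · simp
    have hrange : (Finset.range NB).filter (fun x => x < h) = Finset.range h := by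
      ext z
      simp only [Finset.mem_filter, Finset.mem_range]
      have h1 : 1 ≤ M := by
        rw [hMM']; omega
      have h2 : h ≤ M * h := Nat.le_mul_of_pos_left h (by omega)
      rw [hNB]
      omega
    calc (∑ u ∈ (Fintype.piFinset fun _ : Fin (n+1) => Finset.range NB).filter P,
            ∏ i : Fin (n+1), δ i ^ u i * (u i : K) ^ l i)
        = ∑ x ∈ Finset.range NB,
            ∑ v ∈ (Fintype.piFinset fun _ : Fin n => Finset.range NB).filter
                (fun v => P (Fin.cons x v)),
              ∏ j : Fin (n+1), δ j ^ (Fin.cons (α := fun _ => ℕ) x v j) *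
                ((Fin.cons (α := fun _ => ℕ) x v j : ℕ) : K) ^ l j :=
          sum_filter_piFinset_cons (N := NB) P
            (fun u => ∏ i : Fin (n+1), δ i ^ u i * (u i : K) ^ l i)
      _ = ∑ x ∈ Finset.range NB, (if x < h then W0 x * T x else 0) :=
          Finset.sum_congr rfl perx
      _ = ∑ x ∈ (Finset.range NB).filter (fun x => x < h), W0 x * T x :=
          (Finset.sum_filter _ _).symm
      _ = ∑ x ∈ Finset.range h, W0 x * T x := by rw [hrange]
      _ = ∑ x ∈ Finset.range h, ∑ i : Fin k,
            coef i * (((h:K)^(A i) * (Z i)^h) * ((δ 0 * X i)^x * (x:K)^(l 0 + B i))) := by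
          refine Finset.sum_congr rfl fun x hx => ?_
          rw [Finset.mem_range] at hx
          rw [step2 x hx, Finset.mul_sum]
          refine Finset.sum_congr rfl fun i _ => ?_
          rw [hW0, mul_pow, pow_add]
          ring
      _ = ∑ i : Fin k, ∑ x ∈ Finset.range h,
            coef i * (((h:K)^(A i) * (Z i)^h) * ((δ 0 * X i)^x * (x:K)^(l 0 + B i))) :=
          Finset.sum_comm
      _ = ∑ i : Fin k, coef i * (((h:K)^(A i) * (Z i)^h) *
            (∑ x ∈ Finset.range h, (δ 0 * X i)^x * (x:K)^(l 0 + B i))) := by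
          refine Finset.sum_congr rfl fun i _ => ?_
          rw [Finset.mul_sum, Finset.mul_sum]
  -- now convert the span element gS into coefficients B
  have hqgen : qgen (K := K) c L = Set.range
      (fun p : Fin (L+1) × {x : K // x ∈ Polynomial.nthRootsFinset c (1 : K)} =>
        fun h : ℕ => (h : K) ^ (p.1 : ℕ) * (p.2 : K) ^ h) := by
    ext f
    constructor
    · rintro ⟨a, ξ, ha, hξ, rfl⟩
      exact ⟨(⟨a, by omega⟩, ⟨ξ, (Polynomial.mem_nthRootsFinset hc (1 : K)).mpr hξ⟩), rfl⟩
    · rintro ⟨p, rfl⟩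
      exact ⟨p.1, p.2, by omega, (Polynomial.mem_nthRootsFinset hc (1 : K)).mp p.2.2, rfl⟩
  rw [hqgen] at hgSmem
  obtain ⟨cf, hcf⟩ := (Submodule.mem_span_range_iff_exists_fun K).mp hgSmem
  refine ⟨fun l' ξ => if hl : l' < L + 1 ∧ ξ ∈ Polynomial.nthRootsFinset c (1 : K) then
    cf (⟨l', hl.1⟩, ⟨ξ, hl.2⟩) else 0, ?_⟩
  intro h hh
  have hL1 : (∑ i, l i + (n + 1)) + 1 = L + 1 := by rw [hLL]
  have hBsum : (∑ l' ∈ Finset.range (∑ i, l i + (n+1) + 1),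
        ∑ ξ ∈ Polynomial.nthRootsFinset c (1 : K),
          (fun l' ξ => if hl : l' < L + 1 ∧ ξ ∈ Polynomial.nthRootsFinset c (1 : K) then
            cf (⟨l', hl.1⟩, ⟨ξ, hl.2⟩) else 0) l' ξ * (h : K) ^ l' * ξ ^ h)
      = gS h := by
    rw [show (∑ i, l i + (n+1) + 1) = L + 1 from hL1]
    rw [← hcf]
    rw [Finset.sum_apply]
    rw [← Fin.sum_univ_eq_sum_range (fun l' =>
      ∑ ξ ∈ Polynomial.nthRootsFinset c (1 : K),
        (if hl : l' < L + 1 ∧ ξ ∈ Polynomial.nthRootsFinset c (1 : K) then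
          cf (⟨l', hl.1⟩, ⟨ξ, hl.2⟩) else 0) * (h : K) ^ l' * ξ ^ h) (L+1)]
    rw [Fintype.sum_prod_type]
    refine Finset.sum_congr rfl fun a _ => ?_
    rw [← Finset.sum_coe_sort (Polynomial.nthRootsFinset c (1 : K))
      (fun ξ => (if hl : (a : ℕ) < L + 1 ∧ ξ ∈ Polynomial.nthRootsFinset c (1 : K) then
          cf (⟨(a : ℕ), hl.1⟩, ⟨ξ, hl.2⟩) else 0) * (h : K) ^ (a : ℕ) * ξ ^ h)]
    refine Finset.sum_congr rfl fun ξs _ => ?_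
    rw [Pi.smul_apply, smul_eq_mul]
    rw [dif_pos ⟨a.isLt, ξs.2⟩]
    have h1 : (⟨(a : ℕ), a.isLt⟩ : Fin (L+1)) = a := rfl
    have h2 : (⟨(ξs : K), ξs.2⟩ : {x : K // x ∈ Polynomial.nthRootsFinset c (1 : K)}) = ξs := rfl
    rw [h1, h2]
    ring
  calc (∑ u ∈ (Fintype.piFinset fun _ : Fin (n+1) =>
          Finset.range ((∑ i, (κ i + 1)) * h + 1)).filter
          (fun u => u ⟨0, hr⟩ < h ∧
            ∀ i : Fin (n+1), 0 < (i : ℕ) →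
              (prevOr0 u i + κ ⟨(i : ℕ) - 1, lt_of_le_of_lt (Nat.sub_le _ _) i.isLt⟩ * h < u i ∧
               u i < prevOr0 u i +
                 (κ ⟨(i : ℕ) - 1, lt_of_le_of_lt (Nat.sub_le _ _) i.isLt⟩ + 1) * h)),
        ∏ i : Fin (n+1), δ i ^ u i * (u i : K) ^ l i)
      = ∑ i : Fin k, coef i * (((h:K)^(A i) * (Z i)^h) *
          (∑ x ∈ Finset.range h, (δ 0 * X i)^x * (x:K)^(l 0 + B i))) := hcompute h hh
    _ = gS h := hSeq h hh
    _ = _ := hBsum.symm
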